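/- For every formula A, minimal logic proves N₂(A) ↔ FD(G(A)): the translation N₂(A) = G(A)[F/⊥] factors, up to ML-provable equivalence, as the Friedman–Dragalin translation composed with the Gödel–Gentzen translation. -/

import Mathlib

/-- Formulas of pure first-order predicate logic (de Bruijn indices;
terms are just variables, atoms are predicate symbols applied to variables). -/
inductive Formula : Type
  | bot : Formula
  | atom : ℕ → List ℕ → Formula
  | and : Formula → Formula → Formula
  | or : Formula → Formula → Formula
  | imp : Formula → Formula → Formula
  | all : Formula → Formula
  | ex : Formula → Formula

namespace Formula

def neg (A : Formula) : Formula := A.imp bot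
def iff (A B : Formula) : Formula := (A.imp B).and (B.imp A)

/-- Lift (shift by one) the free variables ≥ c. -/
def liftVar (c v : ℕ) : ℕ := if v < c then v else v + 1

def lift : ℕ → Formula → Formula
  | _, bot => bot
  | c, atom p ts => atom p (ts.map (liftVar c))
  | c, and A B => and (lift c A) (lift c B)
  | c, or A B => or (lift c A) (lift c B)
  | c, imp A B => imp (lift c A) (lift c B)
  | c, all A => all (lift (c+1) A)
  | c, ex A => ex (lift (c+1) A)

/-- Substitute the term (variable) `t` for the bound variable at depth `c`. -/
def substVar (c t v : ℕ) : ℕ := if v < c then v else if v = c then t + c else v - 1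

def subst : ℕ → ℕ → Formula → Formula
  | _, _, bot => bot
  | c, t, atom p ts => atom p (ts.map (substVar c t))
  | c, t, and A B => and (subst c t A) (subst c t B)
  | c, t, or A B => or (subst c t A) (subst c t B)
  | c, t, imp A B => imp (subst c t A) (subst c t B)
  | c, t, all A => all (subst (c+1) t A)
  | c, t, ex A => ex (subst (c+1) t A)

end Formula

/-- The three flavours of logic: minimal, intuitionistic, classical. -/
inductive Flavour : Type
  | min | int | cl
  deriving DecidableEq

/-- Natural deduction. `Prf f Γ A`: A is derivable from hypotheses Γ in
minimal/intuitionistic/classical first-order logic according to `f`. -/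
inductive Prf : Flavour → Set Formula → Formula → Prop
  | hyp {f : Flavour} {Γ : Set Formula} {A : Formula} : A ∈ Γ → Prf f Γ A
  | andI {f : Flavour} {Γ : Set Formula} {A B : Formula} : Prf f Γ A → Prf f Γ B → Prf f Γ (A.and B)
  | andE1 {f : Flavour} {Γ : Set Formula} {A B : Formula} : Prf f Γ (A.and B) → Prf f Γ A
  | andE2 {f : Flavour} {Γ : Set Formula} {A B : Formula} : Prf f Γ (A.and B) → Prf f Γ B
  | orI1 {f : Flavour} {Γ : Set Formula} {A B : Formula} : Prf f Γ A → Prf f Γ (A.or B)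
  | orI2 {f : Flavour} {Γ : Set Formula} {A B : Formula} : Prf f Γ B → Prf f Γ (A.or B)
  | orE {f : Flavour} {Γ : Set Formula} {A B C : Formula} : Prf f Γ (A.or B) → Prf f (insert A Γ) C →
      Prf f (insert B Γ) C → Prf f Γ C
  | impI {f : Flavour} {Γ : Set Formula} {A B : Formula} : Prf f (insert A Γ) B → Prf f Γ (A.imp B)
  | impE {f : Flavour} {Γ : Set Formula} {A B : Formula} : Prf f Γ (A.imp B) → Prf f Γ A → Prf f Γ B
  | allI {f : Flavour} {Γ : Set Formula} {A : Formula} : Prf f (Formula.lift 0 '' Γ) A → Prf f Γ (Formula.all A)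
  | allE {f : Flavour} {Γ : Set Formula} {A : Formula} (t : ℕ) : Prf f Γ (Formula.all A) → Prf f Γ (A.subst 0 t)
  | exI {f : Flavour} {Γ : Set Formula} {A : Formula} (t : ℕ) : Prf f Γ (A.subst 0 t) → Prf f Γ (Formula.ex A)
  | exE {f : Flavour} {Γ : Set Formula} {A B : Formula} : Prf f Γ (Formula.ex A) →
      Prf f (insert A (Formula.lift 0 '' Γ)) (B.lift 0) → Prf f Γ B
  | exfalso {f : Flavour} {Γ : Set Formula} {A : Formula} : f ≠ Flavour.min → Prf f Γ Formula.bot → Prf f Γ A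
  | dne {f : Flavour} {Γ : Set Formula} {A : Formula} : f = Flavour.cl → Prf f Γ A.neg.neg → Prf f Γ A

/-- The Gödel–Gentzen negative translation. -/
def G : Formula → Formula
  | .bot => .bot
  | .atom p ts => (Formula.atom p ts).neg.neg
  | .and A B => (G A).and (G B)
  | .or A B => ((G A).neg.and (G B).neg).neg
  | .imp A B => (G A).imp (G B)
  | .all A => .all (G A)
  | .ex A => (Formula.all (G A).neg).neg

/-- The negative fragment: ⊥, negated atoms, closed under ∧, →, ∀. -/
inductive NF : Formula → Prop
  | bot : NF Formula.bot
  | negAtom (p : ℕ) (ts : List ℕ) : NF (Formula.atom p ts).neg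
  | and {A B} : NF A → NF B → NF (A.and B)
  | imp {A B} : NF A → NF B → NF (A.imp B)
  | all {A} : NF A → NF (Formula.all A)

/-- Iterated lifting (adjusting a formula to sit under `n` binders). -/
def liftN : ℕ → Formula → Formula
  | 0, A => A
  | n+1, A => Formula.lift 0 (liftN n A)

/-- Substitute the formula `F` for every occurrence of ⊥ (written A[F/⊥]). -/
def substBot (F : Formula) : ℕ → Formula → Formula
  | d, .bot => liftN d F
  | _, .atom p ts => .atom p ts
  | d, .and A B => .and (substBot F d A) (substBot F d B)
  | d, .or A B => .or (substBot F d A) (substBot F d B)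
  | d, .imp A B => .imp (substBot F d A) (substBot F d B)
  | d, .all A => .all (substBot F (d+1) A)
  | d, .ex A => .ex (substBot F (d+1) A)

/-- The translation N₂(A) = G(A)[F/⊥]. -/
def N2 (F A : Formula) : Formula := substBot F 0 (G A)

/-- The Friedman–Dragalin translation: replace ⊥ by F and every atomic
subformula P ≢ ⊥ by P ∨ F. -/
def FD (F : Formula) : ℕ → Formula → Formula
  | d, .bot => liftN d F
  | d, .atom p ts => (Formula.atom p ts).or (liftN d F)
  | d, .and A B => .and (FD F d A) (FD F d B)
  | d, .or A B => .or (FD F d A) (FD F d B)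
  | d, .imp A B => .imp (FD F d A) (FD F d B)
  | d, .all A => .all (FD F (d+1) A)
  | d, .ex A => .ex (FD F (d+1) A)


-- Auxiliary lemmas

theorem Prf.weaken {f : Flavour} {Γ Δ : Set Formula} {A : Formula}
    (h : Prf f Γ A) (sub : Γ ⊆ Δ) : Prf f Δ A := by
  induction h generalizing Δ with
  | hyp h => exact .hyp (sub h)
  | andI _ _ ih1 ih2 => exact .andI (ih1 sub) (ih2 sub)
  | andE1 _ ih => exact .andE1 (ih sub)
  | andE2 _ ih => exact .andE2 (ih sub)
  | orI1 _ ih => exact .orI1 (ih sub)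
  | orI2 _ ih => exact .orI2 (ih sub)
  | orE _ _ _ ih ih1 ih2 =>
      exact .orE (ih sub) (ih1 (Set.insert_subset_insert sub))
        (ih2 (Set.insert_subset_insert sub))
  | impI _ ih => exact .impI (ih (Set.insert_subset_insert sub))
  | impE _ _ ih1 ih2 => exact .impE (ih1 sub) (ih2 sub)
  | allI _ ih => exact .allI (ih (Set.image_mono sub))
  | allE t _ ih => exact .allE t (ih sub)
  | exI t _ ih => exact .exI t (ih sub)
  | exE _ _ ih1 ih2 =>
      exact .exE (ih1 sub) (ih2 (Set.insert_subset_insert (Set.image_mono sub)))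
  | exfalso hf _ ih => exact .exfalso hf (ih sub)
  | dne hf _ ih => exact .dne hf (ih sub)

theorem Prf.hyp0 {f : Flavour} {Γ : Set Formula} {A : Formula} :
    Prf f (insert A Γ) A := .hyp (Set.mem_insert _ _)

theorem Prf.hyp1 {f : Flavour} {Γ : Set Formula} {A B : Formula} :
    Prf f (insert B (insert A Γ)) A := .hyp (Set.mem_insert_of_mem _ (Set.mem_insert _ _))

theorem Prf.iff_refl {f : Flavour} {Γ : Set Formula} (A : Formula) :
    Prf f Γ (A.iff A) := .andI (.impI .hyp0) (.impI .hyp0)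

theorem Prf.mp1 {X Y : Formula} (h : Prf Flavour.min ∅ (X.iff Y)) {Γ : Set Formula}
    (hx : Prf Flavour.min Γ X) : Prf Flavour.min Γ Y :=
  .impE ((Prf.andE1 h).weaken (Set.empty_subset _)) hx

theorem Prf.mp2 {X Y : Formula} (h : Prf Flavour.min ∅ (X.iff Y)) {Γ : Set Formula}
    (hy : Prf Flavour.min Γ Y) : Prf Flavour.min Γ X :=
  .impE ((Prf.andE2 h).weaken (Set.empty_subset _)) hy

/-- The key case: ML ⊢ (P → F) ↔ (P ∨ F → F). -/
theorem Prf.key (P X : Formula) :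
    Prf Flavour.min ∅ ((P.imp X).iff ((P.or X).imp X)) := by
  refine .andI (.impI (.impI ?_)) (.impI (.impI ?_))
  · exact .orE .hyp0 (.impE (.hyp (by simp)) .hyp0) .hyp0
  · exact .impE .hyp1 (.orI1 .hyp0)

theorem substVar_liftVar (c v : ℕ) :
    Formula.substVar c 0 (Formula.liftVar (c+1) v) = v := by
  simp only [Formula.liftVar, Formula.substVar]
  split_ifs <;> omega

theorem subst_lift (A : Formula) : ∀ c, (A.lift (c+1)).subst c 0 = A := by
  induction A with
  | bot => intro c; rfl
  | atom p ts =>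
      intro c
      simp only [Formula.lift, Formula.subst, List.map_map]
      suffices h : ts.map (Formula.substVar c 0 ∘ Formula.liftVar (c+1)) = ts by
        simpa using h
      induction ts with
      | nil => rfl
      | cons a t ih => simp [substVar_liftVar, ih]
  | and A B ihA ihB => intro c; simp [Formula.lift, Formula.subst, ihA c, ihB c]
  | or A B ihA ihB => intro c; simp [Formula.lift, Formula.subst, ihA c, ihB c]
  | imp A B ihA ihB => intro c; simp [Formula.lift, Formula.subst, ihA c, ihB c]
  | all A ihA => intro c; simp [Formula.lift, Formula.subst, ihA (c+1)]
  | ex A ihA => intro c; simp [Formula.lift, Formula.subst, ihA (c+1)]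

theorem Prf.and_congr {A A' B B' : Formula}
    (h1 : Prf Flavour.min ∅ (A.iff A')) (h2 : Prf Flavour.min ∅ (B.iff B')) :
    Prf Flavour.min ∅ ((A.and B).iff (A'.and B')) :=
  .andI (.impI (.andI (h1.mp1 (.andE1 .hyp0)) (h2.mp1 (.andE2 .hyp0))))
    (.impI (.andI (h1.mp2 (.andE1 .hyp0)) (h2.mp2 (.andE2 .hyp0))))

theorem Prf.imp_congr {A A' B B' : Formula}
    (h1 : Prf Flavour.min ∅ (A.iff A')) (h2 : Prf Flavour.min ∅ (B.iff B')) :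
    Prf Flavour.min ∅ ((A.imp B).iff (A'.imp B')) :=
  .andI (.impI (.impI (h2.mp1 (.impE .hyp1 (h1.mp2 .hyp0)))))
    (.impI (.impI (h2.mp2 (.impE .hyp1 (h1.mp1 .hyp0)))))

theorem Prf.all_imp {C D : Formula} (h : Prf Flavour.min ∅ (C.iff D)) :
    Prf Flavour.min ∅ ((Formula.all C).imp (Formula.all D)) := by
  refine .impI (.allI ?_)
  have hall : Prf Flavour.min (Formula.lift 0 '' (insert (Formula.all C) ∅))
      (Formula.all (C.lift 1)) := .hyp ⟨Formula.all C, Set.mem_insert _ _, rfl⟩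
  have hc := Prf.allE 0 hall
  rw [subst_lift C 0] at hc
  exact h.mp1 hc

theorem Prf.all_congr {C D : Formula} (h : Prf Flavour.min ∅ (C.iff D)) :
    Prf Flavour.min ∅ ((Formula.all C).iff (Formula.all D)) :=
  .andI h.all_imp (Prf.all_imp (.andI (.andE2 h) (.andE1 h)))

theorem NF_G (A : Formula) : NF (G A) := by
  induction A with
  | bot => exact .bot
  | atom p ts => exact .imp (.negAtom p ts) .bot
  | and A B ihA ihB => exact .and ihA ihB
  | or A B ihA ihB => exact .imp (.and (.imp ihA .bot) (.imp ihB .bot)) .bot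
  | imp A B ihA ihB => exact .imp ihA ihB
  | all A ihA => exact .all ihA
  | ex A ihA => exact .imp (.all (.imp ihA .bot)) .bot

theorem substBot_iff_FD (F : Formula) {B : Formula} (h : NF B) :
    ∀ d, Prf Flavour.min ∅ ((substBot F d B).iff (FD F d B)) := by
  induction h with
  | bot => intro d; exact Prf.iff_refl _
  | negAtom p ts => intro d; exact Prf.key (Formula.atom p ts) (liftN d F)
  | and _ _ ih1 ih2 => intro d; exact (ih1 d).and_congr (ih2 d)
  | imp _ _ ih1 ih2 => intro d; exact (ih1 d).imp_congr (ih2 d)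
  | all _ ih => intro d; exact (ih (d+1)).all_congr

/-- Factorisation N₂ = FD ∘ G up to provable equivalence in minimal logic. -/
theorem N2_eq_FD_G (F A : Formula) :
    Prf Flavour.min ∅ ((N2 F A).iff (FD F 0 (G A))) := substBot_iff_FD F (NF_G A) 0
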